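/- For all integers k and t with k ≥ t ≥ 1 there exists a connected graph G with maximum degree Δ(G) = 2t² + 1 and diameter diam(G) = 2t² + 1 + k such that prc(G) ≥ rc(G) + t. -/

import Mathlib

open SimpleGraph

variable {V : Type*}

/-- A walk is rainbow under edge colouring `c` if its edges receive pairwise distinct colours. -/
def SimpleGraph.Walk.IsRainbow {G : SimpleGraph V} {u v : V} (c : Sym2 V → ℕ) (p : G.Walk u v) :
    Prop :=
  (p.edges.map c).Nodup

/-- `G` is rainbow connected under the edge colouring `c`: any two vertices are joined by a
rainbow path. -/
def SimpleGraph.RainbowConnected (G : SimpleGraph V) (c : Sym2 V → ℕ) : Prop :=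
  ∀ u v : V, ∃ p : G.Walk u v, p.IsPath ∧ p.IsRainbow c

/-- `c` is a proper edge colouring of `G`: adjacent edges receive distinct colours. -/
def SimpleGraph.IsProperEdgeColoring (G : SimpleGraph V) (c : Sym2 V → ℕ) : Prop :=
  ∀ ⦃u v w : V⦄, G.Adj u v → G.Adj u w → v ≠ w → c s(u, v) ≠ c s(u, w)

/-- The colouring `c` uses at most `k` colours on the edges of `G`. -/
def SimpleGraph.ColorsLE (G : SimpleGraph V) (c : Sym2 V → ℕ) (k : ℕ) : Prop :=
  ∀ e ∈ G.edgeSet, c e < k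

/-- The rainbow connection number `rc(G)`. -/
noncomputable def SimpleGraph.rcNumber (G : SimpleGraph V) : ℕ :=
  sInf {k | ∃ c : Sym2 V → ℕ, G.ColorsLE c k ∧ G.RainbowConnected c}

/-- The proper rainbow connection number `prc(G)`. -/
noncomputable def SimpleGraph.prcNumber (G : SimpleGraph V) : ℕ :=
  sInf {k | ∃ c : Sym2 V → ℕ, G.ColorsLE c k ∧ G.IsProperEdgeColoring c ∧ G.RainbowConnected c}

/-- The chromatic index `χ'(G)`. -/
noncomputable def SimpleGraph.chromaticIndex (G : SimpleGraph V) : ℕ :=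
  sInf {k | ∃ c : Sym2 V → ℕ, G.ColorsLE c k ∧ G.IsProperEdgeColoring c}


namespace Stmt4Aux

abbrev Vtx (n m : ℕ) := (Fin n × Bool) ⊕ Fin (m+1)

variable (n m : ℕ)

def adjF : Vtx n m → Vtx n m → Prop
  | .inl (i,β), .inl (j,γ) => i = j ∧ β ≠ γ
  | .inl _, .inr a => a.val = 0
  | .inr a, .inl _ => a.val = 0
  | .inr a, .inr b => a.val + 1 = b.val ∨ b.val + 1 = a.val

def G : SimpleGraph (Vtx n m) where
  Adj := adjF n m
  symm := by
    constructor
    rintro (⟨i,β⟩|a) (⟨j,γ⟩|b) h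
    · exact ⟨h.1.symm, h.2.symm⟩
    · exact h
    · exact h
    · exact h.symm
  loopless := by
    constructor
    rintro (⟨i,β⟩|a) h
    · exact h.2 rfl
    · rcases h with h | h <;> omega

instance : DecidableRel (G n m).Adj := fun x y =>
  match x, y with
  | .inl (i,β), .inl (j,γ) => inferInstanceAs (Decidable (i = j ∧ β ≠ γ))
  | .inl _, .inr a => inferInstanceAs (Decidable (a.val = 0))
  | .inr a, .inl _ => inferInstanceAs (Decidable (a.val = 0))
  | .inr a, .inr b => inferInstanceAs (Decidable (_ ∨ _))

lemma G_adj {x y : Vtx n m} : (G n m).Adj x y ↔ adjF n m x y := Iff.rfl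

/-- path vertices -/
def pvx (a : ℕ) : Vtx n m := .inr ⟨a % (m+1), Nat.mod_lt _ (Nat.succ_pos m)⟩

lemma pvx_def {a : ℕ} (h : a ≤ m) : pvx n m a = .inr ⟨a, by omega⟩ := by
  have : a % (m+1) = a := Nat.mod_eq_of_lt (by omega)
  simp [pvx, Fin.ext_iff, this]

lemma pvx_inj {a b : ℕ} (ha : a ≤ m) (hb : b ≤ m) (h : pvx n m a = pvx n m b) : a = b := by
  rw [pvx_def n m ha, pvx_def n m hb] at h
  simpa [Fin.ext_iff] using h

lemma adj_pvx {a b : ℕ} (ha : a ≤ m) (hb : b ≤ m) (h : a + 1 = b ∨ b + 1 = a) :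
    (G n m).Adj (pvx n m a) (pvx n m b) := by
  rw [pvx_def n m ha, pvx_def n m hb, G_adj]
  simpa [adjF] using h

lemma adj_spoke (i : Fin n) (β : Bool) : (G n m).Adj (.inl (i,β)) (pvx n m 0) := by
  rw [pvx_def n m (by omega), G_adj]
  simp [adjF]

lemma adj_tri (i : Fin n) {β γ : Bool} (h : β ≠ γ) :
    (G n m).Adj (.inl (i,β)) (.inl (i,γ)) := by
  rw [G_adj]
  simp [adjF, h]


section Walks
variable {W : Type} {H : SimpleGraph W}

lemma isPath_concat {u v w : W} {p : H.Walk u v} (hp : p.IsPath) (h : H.Adj v w)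
    (hw : w ∉ p.support) : (p.concat h).IsPath := by
  rw [← Walk.isPath_reverse_iff, Walk.reverse_concat, Walk.cons_isPath_iff]
  refine ⟨by rwa [Walk.isPath_reverse_iff], ?_⟩
  rwa [Walk.support_reverse, List.mem_reverse]

end Walks

/-- the straight path from `pvx a` to `pvx (a+d)` -/
def pw2 (a : ℕ) : (d : ℕ) → a + d ≤ m → (G n m).Walk (pvx n m a) (pvx n m (a+d))
  | 0, _ => Walk.nil
  | d+1, h => (pw2 a d (by omega)).concat
      (adj_pvx n m (by omega) (by omega) (Or.inl rfl))

@[simp] lemma pw2_length (a d : ℕ) (h : a + d ≤ m) : (pw2 n m a d h).length = d := by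
  induction d with
  | zero => rfl
  | succ d ih => rw [pw2, Walk.length_concat, ih]

lemma pw2_support (a d : ℕ) (h : a + d ≤ m) :
    ∀ x ∈ (pw2 n m a d h).support, ∃ b, a ≤ b ∧ b ≤ a + d ∧ x = pvx n m b := by
  induction d with
  | zero =>
    intro x hx
    rw [pw2, Walk.support_nil] at hx
    simp at hx
    exact ⟨a, le_refl a, by omega, hx⟩
  | succ d ih =>
    intro x hx
    rw [pw2, Walk.support_concat] at hx
    rcases (by simpa using hx : x ∈ _ ∨ x = _) with hx | hx
    · obtain ⟨b, hb1, hb2, hb3⟩ := ih (by omega) x hx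
      exact ⟨b, hb1, by omega, hb3⟩
    · exact ⟨a + (d+1), by omega, le_refl _, hx⟩

lemma pw2_isPath (a d : ℕ) (h : a + d ≤ m) : (pw2 n m a d h).IsPath := by
  induction d with
  | zero => exact Walk.IsPath.nil
  | succ d ih =>
    refine isPath_concat (ih (by omega)) _ ?_
    intro hmem
    obtain ⟨b, hb1, hb2, hb3⟩ := pw2_support n m a d (by omega) _ hmem
    have := pvx_inj n m (by omega) (by omega) hb3
    omega

lemma pw2_edges (a d : ℕ) (h : a + d ≤ m) :
    ∀ e ∈ (pw2 n m a d h).edges, ∃ b, a ≤ b ∧ b + 1 ≤ a + d ∧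
      e = s(pvx n m b, pvx n m (b+1)) := by
  induction d with
  | zero =>
    intro e he
    rw [pw2, Walk.edges_nil] at he
    simp at he
  | succ d ih =>
    intro e he
    rw [pw2, Walk.edges_concat] at he
    rcases (by simpa using he : e ∈ _ ∨ e = _) with he | he
    · obtain ⟨b, hb1, hb2, hb3⟩ := ih (by omega) e he
      exact ⟨b, hb1, by omega, hb3⟩
    · exact ⟨a + d, by omega, by omega, he⟩


/-! ### The rc colouring -/

def spc (β : Bool) : ℕ := if β then (if n = 1 then m else m+1) else m

def tcol : ℕ := if n = 1 then m else 0

def gcol : Vtx n m → Vtx n m → ℕ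
  | .inr a, .inr b => min a.val b.val
  | .inl (_,β), .inr _ => spc n m β
  | .inr _, .inl (_,β) => spc n m β
  | .inl _, .inl _ => tcol n m

def crc : Sym2 (Vtx n m) → ℕ :=
  Sym2.lift ⟨gcol n m, by rintro (⟨i,β⟩|a) (⟨j,γ⟩|b) <;> simp [gcol, Nat.min_comm]⟩

@[simp] lemma crc_mk (x y : Vtx n m) : crc n m s(x, y) = gcol n m x y := Sym2.lift_mk ..

lemma crc_path {b : ℕ} (h : b + 1 ≤ m) :
    crc n m s(pvx n m b, pvx n m (b+1)) = b := by
  rw [pvx_def n m (by omega), pvx_def n m (by omega), crc_mk]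
  show min _ _ = b
  simp

lemma pw2_colors (a d : ℕ) (h : a + d ≤ m) :
    (pw2 n m a d h).edges.map (crc n m) = List.range' a d := by
  induction d with
  | zero => rfl
  | succ d ih =>
    rw [pw2, Walk.edges_concat, List.concat_eq_append, List.map_append,
      ih (by omega), List.range'_1_concat]
    show List.range' a d ++ [crc n m s(pvx n m (a+d), pvx n m ((a+d)+1))]
      = List.range' a d ++ [a + d]
    rw [crc_path n m (show (a+d)+1 ≤ m by omega)]

/-- straight path between `pvx a` and `pvx b`, `a ≤ b`. -/
def W1 (a b : ℕ) (hab : a ≤ b) (hb : b ≤ m) : (G n m).Walk (pvx n m a) (pvx n m b) :=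
  (pw2 n m a (b - a) (by omega)).copy rfl (by congr 1; omega)

lemma W1_colors (a b : ℕ) (hab : a ≤ b) (hb : b ≤ m) :
    (W1 n m a b hab hb).edges.map (crc n m) = List.range' a (b - a) := by
  rw [W1, Walk.edges_copy, pw2_colors]

lemma W1_isPath (a b : ℕ) (hab : a ≤ b) (hb : b ≤ m) : (W1 n m a b hab hb).IsPath := by
  rw [W1, Walk.isPath_copy]; exact pw2_isPath n m a (b-a) (by omega)

lemma W1_support (a b : ℕ) (hab : a ≤ b) (hb : b ≤ m) :
    ∀ x ∈ (W1 n m a b hab hb).support, ∃ e, a ≤ e ∧ e ≤ b ∧ x = pvx n m e := by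
  rw [W1, Walk.support_copy]
  intro x hx
  obtain ⟨e, h1, h2, h3⟩ := pw2_support n m a (b-a) (by omega) x hx
  exact ⟨e, h1, by omega, h3⟩

lemma W1_length (a b : ℕ) (hab : a ≤ b) (hb : b ≤ m) :
    (W1 n m a b hab hb).length = b - a := by
  rw [W1, Walk.length_copy, pw2_length]

lemma inl_not_in_W1 (p : Fin n × Bool) (a b : ℕ) (hab : a ≤ b) (hb : b ≤ m) :
    (Sum.inl p : Vtx n m) ∉ (W1 n m a b hab hb).support := by
  intro hmem
  obtain ⟨e, _, he, h3⟩ := W1_support n m a b hab hb _ hmem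
  rw [pvx_def n m (by omega)] at h3
  exact absurd h3 (by simp)

/-- spoke walk from a triangle vertex to `pvx b` -/
def WS (i : Fin n) (β : Bool) (b : ℕ) (hb : b ≤ m) :
    (G n m).Walk (.inl (i,β)) (pvx n m b) :=
  Walk.cons (adj_spoke n m i β) (W1 n m 0 b (by omega) hb)

lemma WS_isPath (i : Fin n) (β : Bool) (b : ℕ) (hb : b ≤ m) : (WS n m i β b hb).IsPath := by
  rw [WS, Walk.cons_isPath_iff]
  exact ⟨W1_isPath n m 0 b _ hb, inl_not_in_W1 n m _ 0 b _ hb⟩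

lemma crc_spoke (i : Fin n) (β : Bool) :
    crc n m s(.inl (i,β), pvx n m 0) = spc n m β := by
  rw [pvx_def n m (by omega), crc_mk]
  rfl

lemma WS_colors (i : Fin n) (β : Bool) (b : ℕ) (hb : b ≤ m) :
    (WS n m i β b hb).edges.map (crc n m) = spc n m β :: List.range' 0 b := by
  rw [WS, Walk.edges_cons, List.map_cons, W1_colors, crc_spoke, Nat.sub_zero]

lemma spc_ge (β : Bool) : m ≤ spc n m β := by
  rw [spc]
  split
  · split <;> omega
  · exact le_refl m

lemma WS_rainbow (i : Fin n) (β : Bool) (b : ℕ) (hb : b ≤ m) :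
    ((WS n m i β b hb).edges.map (crc n m)).Nodup := by
  rw [WS_colors, List.nodup_cons]
  refine ⟨?_, List.nodup_range' ..⟩
  intro hmem
  rw [List.mem_range'_1] at hmem
  have := spc_ge n m β
  omega


@[simp] lemma gcol_lr (p : Fin n × Bool) (a : Fin (m+1)) :
    gcol n m (.inl p) (.inr a) = spc n m p.2 := rfl
@[simp] lemma gcol_rl (p : Fin n × Bool) (a : Fin (m+1)) :
    gcol n m (.inr a) (.inl p) = spc n m p.2 := rfl
@[simp] lemma gcol_ll (p q : Fin n × Bool) :
    gcol n m (.inl p) (.inl q) = tcol n m := rfl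
@[simp] lemma gcol_rr (a b : Fin (m+1)) :
    gcol n m (.inr a) (.inr b) = min a.val b.val := rfl

lemma inr_pvx (a : Fin (m+1)) : pvx n m a.val = Sum.inr a := by
  rw [pvx_def n m (by omega)]

lemma exists_rainbow_rev {W : Type} {H : SimpleGraph W} {c : Sym2 W → ℕ} {x y : W}
    (h : ∃ p : H.Walk x y, p.IsPath ∧ p.IsRainbow c) :
    ∃ p : H.Walk y x, p.IsPath ∧ p.IsRainbow c := by
  obtain ⟨p, hp, hr⟩ := h
  refine ⟨p.reverse, (Walk.isPath_reverse_iff p).mpr hp, ?_⟩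
  unfold Walk.IsRainbow at hr ⊢
  rw [Walk.edges_reverse, List.map_reverse, List.nodup_reverse]
  exact hr

lemma spc_ne (hn1 : n ≠ 1) {β γ : Bool} (h : β ≠ γ) : spc n m β ≠ spc n m γ := by
  rcases β <;> rcases γ <;> simp_all [spc]

lemma tcol_zero (hn1 : n ≠ 1) : tcol n m = 0 := by simp [tcol, hn1]

lemma rainbow_lr (hm : 3 ≤ m) (i : Fin n) (β : Bool) (a : Fin (m+1)) :
    ∃ p : (G n m).Walk (.inl (i,β)) (.inr a), p.IsPath ∧ p.IsRainbow (crc n m) := by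
  rw [← inr_pvx n m a]
  exact ⟨WS n m i β a.val (by omega), WS_isPath n m i β a.val (by omega),
    WS_rainbow n m i β a.val (by omega)⟩

@[simp] lemma crc_spokeL (p : Fin n × Bool) :
    crc n m s(Sum.inl p, pvx n m 0) = spc n m p.2 := by
  rw [pvx_def n m (by omega), crc_mk, gcol_lr]

@[simp] lemma crc_spokeR (p : Fin n × Bool) :
    crc n m s(pvx n m 0, Sum.inl p) = spc n m p.2 := by
  rw [pvx_def n m (by omega), crc_mk, gcol_rl]

@[simp] lemma crc_tri (p q : Fin n × Bool) :
    crc n m s(Sum.inl p, Sum.inl q) = tcol n m := by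
  rw [crc_mk, gcol_ll]

lemma rainbow_ll (hm : 3 ≤ m) (i j : Fin n) (β γ : Bool) :
    ∃ p : (G n m).Walk (.inl (i,β)) (.inl (j,γ)), p.IsPath ∧ p.IsRainbow (crc n m) := by
  have h0 : (pvx n m 0 : Vtx n m) = Sum.inr ⟨0, by omega⟩ := pvx_def n m (by omega)
  by_cases hij : i = j
  · subst hij
    by_cases hbg : β = γ
    · subst hbg
      exact ⟨Walk.nil, Walk.IsPath.nil, by simp [Walk.IsRainbow]⟩
    · refine ⟨Walk.cons (adj_tri n m i hbg) Walk.nil, ?_, ?_⟩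
      · rw [Walk.cons_isPath_iff]
        simp [hbg]
      · simp [Walk.IsRainbow]
  · have hn1 : n ≠ 1 := by
      have hi := i.isLt
      have hj := j.isLt
      have : i.val ≠ j.val := fun hc => hij (Fin.ext hc)
      omega
    have h2 := tcol_zero n m hn1
    by_cases hbg : β = γ
    · subst hbg
      refine ⟨Walk.cons (adj_spoke n m i β) (Walk.cons ((adj_spoke n m j (!β)).symm)
        (Walk.cons (adj_tri n m j (by simp)) Walk.nil)), ?_, ?_⟩
      · simp only [Walk.cons_isPath_iff, Walk.support_cons, Walk.support_nil, h0,
          Walk.isPath_iff_eq_nil, List.mem_cons, List.mem_singleton, List.not_mem_nil]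
        simp [Prod.ext_iff, hij, Ne.symm hij]
      · show (List.map (crc n m) _).Nodup
        simp only [Walk.edges_cons, Walk.edges_nil, List.map_cons, List.map_nil,
          crc_spokeL, crc_spokeR, crc_tri]
        have h1 : spc n m β ≠ spc n m (!β) := spc_ne n m hn1 (by simp)
        have h3 := spc_ge n m β
        have h4 := spc_ge n m (!β)
        simp only [List.nodup_cons, List.mem_cons, List.mem_singleton, List.not_mem_nil,
          List.nodup_nil, not_false_iff, and_true, not_or]
        refine ⟨⟨h1, by omega⟩, by omega⟩
    · refine ⟨Walk.cons (adj_spoke n m i β) (Walk.cons ((adj_spoke n m j γ).symm)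
        Walk.nil), ?_, ?_⟩
      · simp only [Walk.cons_isPath_iff, Walk.support_cons, Walk.support_nil, h0,
          Walk.isPath_iff_eq_nil, List.mem_cons, List.mem_singleton, List.not_mem_nil]
        simp [Prod.ext_iff, hij]
      · show (List.map (crc n m) _).Nodup
        simp only [Walk.edges_cons, Walk.edges_nil, List.map_cons, List.map_nil,
          crc_spokeL, crc_spokeR]
        have h1 : spc n m β ≠ spc n m γ := spc_ne n m hn1 hbg
        simp [h1]

lemma rc_rainbow (hm : 3 ≤ m) : (G n m).RainbowConnected (crc n m) := by
  rintro (⟨i,β⟩|a) (⟨j,γ⟩|b)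
  · exact rainbow_ll n m hm i j β γ
  · exact rainbow_lr n m hm i β b
  · exact exists_rainbow_rev (rainbow_lr n m hm j γ a)
  · rcases le_total a.val b.val with hab | hab
    · rw [← inr_pvx n m a, ← inr_pvx n m b]
      refine ⟨W1 n m a.val b.val hab (by omega), W1_isPath n m _ _ hab (by omega), ?_⟩
      show (List.map (crc n m) _).Nodup
      rw [W1_colors]
      exact List.nodup_range' ..
    · apply exists_rainbow_rev
      rw [← inr_pvx n m a, ← inr_pvx n m b]
      refine ⟨W1 n m b.val a.val hab (by omega), W1_isPath n m _ _ hab (by omega), ?_⟩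
      show (List.map (crc n m) _).Nodup
      rw [W1_colors]
      exact List.nodup_range' ..

lemma spc_lt (β : Bool) : spc n m β < (if n = 1 then m+1 else m+2) := by
  rcases eq_or_ne n 1 with h|h <;> rcases β <;> simp [spc, h] <;> omega

lemma tcol_lt (hm : 3 ≤ m) : tcol n m < (if n = 1 then m+1 else m+2) := by
  rcases eq_or_ne n 1 with h|h <;> simp [tcol, h] <;> omega

lemma crc_colorsLE (hm : 3 ≤ m) :
    (G n m).ColorsLE (crc n m) (if n = 1 then m+1 else m+2) := by
  intro e he
  induction e with
  | _ x y =>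
    rcases x with ⟨i,β⟩|a <;> rcases y with ⟨j,γ⟩|b
    · rw [crc_mk, gcol_ll]
      exact tcol_lt n m hm
    · rw [crc_mk, gcol_lr]
      exact spc_lt n m β
    · rw [crc_mk, gcol_rl]
      exact spc_lt n m γ
    · rw [crc_mk, gcol_rr]
      have hb := b.isLt
      have ha := a.isLt
      have : min a.val b.val ≤ m := by omega
      split <;> omega


/-! ### Connectivity, degrees, diameter -/

lemma G_connected (hm : 3 ≤ m) : (G n m).Connected := by
  rw [connected_iff]
  refine ⟨fun x y => ?_, ⟨pvx n m 0⟩⟩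
  obtain ⟨p, -, -⟩ := rc_rainbow n m hm x y
  exact ⟨p⟩

lemma inr_eq_pvx {b : Fin (m+1)} {a : ℕ} (ha : a ≤ m) (h : b.val = a) :
    Sum.inr b = pvx n m a := by
  rw [pvx_def n m ha]
  exact congrArg Sum.inr (Fin.ext (by simp [h]))

lemma hub_neighbors (hm : 3 ≤ m) :
    (G n m).neighborFinset (pvx n m 0) =
      (Finset.univ.image fun p : Fin n × Bool => (Sum.inl p : Vtx n m)) ∪
        {Sum.inr ⟨1, by omega⟩} := by
  ext y
  rw [mem_neighborFinset, pvx_def n m (by omega)]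
  rcases y with p|b
  · simp only [Finset.mem_union, Finset.mem_image, Finset.mem_univ, true_and,
      Finset.mem_singleton]
    constructor
    · intro _; exact Or.inl ⟨p, rfl⟩
    · intro _
      rw [G_adj]
      rcases p with ⟨i,β⟩
      simp [adjF]
  · have heq : (G n m).Adj (Sum.inr ⟨0, by omega⟩) (Sum.inr b) ↔
        (0+1 = b.val ∨ b.val + 1 = 0) := Iff.rfl
    rw [heq]
    simp only [Finset.mem_union, Finset.mem_image, Finset.mem_univ, true_and,
      Finset.mem_singleton]
    constructor
    · intro h
      exact Or.inr (congrArg Sum.inr (Fin.ext (by simp; omega)))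
    · rintro (⟨p, hp⟩ | h)
      · exact absurd hp (by simp)
      · have hb : b = ⟨1, by omega⟩ := Sum.inr.inj h
        subst hb
        simp

lemma deg_hub (hm : 3 ≤ m) : (G n m).degree (pvx n m 0) = 2*n+1 := by
  show ((G n m).neighborFinset (pvx n m 0)).card = 2*n+1
  rw [hub_neighbors n m hm, Finset.card_union_of_disjoint, Finset.card_image_of_injective _
    Sum.inl_injective, Finset.card_singleton]
  · simp [Fintype.card_prod, mul_comm]
  · simp

lemma degree_le (hn : 1 ≤ n) (hm : 3 ≤ m) (x : Vtx n m) : (G n m).degree x ≤ 2*n+1 := by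
  rcases x with ⟨i,β⟩|a
  · show ((G n m).neighborFinset _).card ≤ 2*n+1
    have hsub : (G n m).neighborFinset (Sum.inl (i,β)) ⊆
        {Sum.inl (i,!β), pvx n m 0} := by
      intro y hy
      rw [mem_neighborFinset] at hy
      have hy' : adjF n m (Sum.inl (i,β)) y := hy
      rcases y with ⟨j,γ⟩|b
      · obtain ⟨h1, h2⟩ := hy'
        subst h1
        have : γ = !β := by rcases β <;> rcases γ <;> simp_all
        subst this
        simp
      · have hb0 : b.val = 0 := hy'
        have : Sum.inr b = pvx n m 0 := inr_eq_pvx n m (by omega) hb0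
        simp [this]
    calc ((G n m).neighborFinset _).card ≤ _ := Finset.card_le_card hsub
    _ ≤ 2 := Finset.card_insert_le _ _ |>.trans (by simp)
    _ ≤ 2*n+1 := by omega
  · by_cases ha : a.val = 0
    · have : Sum.inr a = pvx n m 0 := inr_eq_pvx n m (by omega) ha
      rw [this, deg_hub n m hm]
    · show ((G n m).neighborFinset _).card ≤ 2*n+1
      have hsub : (G n m).neighborFinset (Sum.inr a) ⊆
          {pvx n m (a.val - 1), pvx n m (a.val + 1)} := by
        intro y hy
        rw [mem_neighborFinset] at hy
        have hy' : adjF n m (Sum.inr a) y := hy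
        rcases y with ⟨j,γ⟩|b
        · exact absurd hy' ha
        · have hb := b.isLt
          have haa := a.isLt
          rcases hy' with h | h
          · have : Sum.inr b = pvx n m (a.val + 1) := inr_eq_pvx n m (by omega) (by omega)
            simp [this]
          · have : Sum.inr b = pvx n m (a.val - 1) := inr_eq_pvx n m (by omega) (by omega)
            simp [this]
      calc ((G n m).neighborFinset _).card ≤ _ := Finset.card_le_card hsub
      _ ≤ 2 := Finset.card_insert_le _ _ |>.trans (by simp)
      _ ≤ 2*n+1 := by omega

lemma maxDegree_eq (hn : 1 ≤ n) (hm : 3 ≤ m) : (G n m).maxDegree = 2*n+1 := by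
  refine le_antisymm ?_ ?_
  · apply SimpleGraph.maxDegree_le_of_forall_degree_le
    exact degree_le n m hn hm
  · rw [← deg_hub n m hm]
    exact SimpleGraph.degree_le_maxDegree _ _

/-! ### Cut edges and the diameter -/

def rank : Vtx n m → ℕ
  | .inl _ => 0
  | .inr a => a.val

@[simp] lemma rank_inl (p : Fin n × Bool) : rank n m (Sum.inl p) = 0 := rfl
@[simp] lemma rank_inr (a : Fin (m+1)) : rank n m (Sum.inr a) = a.val := rfl

def Ej (j : ℕ) : Sym2 (Vtx n m) := s(pvx n m j, pvx n m (j+1))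

lemma Ej_inj {j j' : ℕ} (hj : j+1 ≤ m) (hj' : j'+1 ≤ m) (h : Ej n m j = Ej n m j') :
    j = j' := by
  rw [Ej, Ej, pvx_def n m (by omega : j ≤ m), pvx_def n m (by omega : j+1 ≤ m),
    pvx_def n m (by omega : j' ≤ m), pvx_def n m (by omega : j'+1 ≤ m), Sym2.eq_iff] at h
  rcases h with ⟨h1, h2⟩ | ⟨h1, h2⟩ <;>
    simp only [Sum.inr.injEq, Fin.mk.injEq] at h1 h2 <;> omega

lemma Ej_no_inl {j : ℕ} (hj : j+1 ≤ m) (p : Fin n × Bool) :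
    (Sum.inl p : Vtx n m) ∉ Ej n m j := by
  rw [Ej, pvx_def n m (by omega : j ≤ m), pvx_def n m (by omega : j+1 ≤ m)]
  simp

lemma cross : ∀ {x y : Vtx n m} (w : (G n m).Walk x y) {j : ℕ}, j + 1 ≤ m →
    rank n m x ≤ j → j + 1 ≤ rank n m y → Ej n m j ∈ w.edges
  | x, _, .nil, j, hj, hx, hy => absurd hx (by omega)
  | x, y, .cons h p, j, hj, hx, hy => by
    rename_i v
    by_cases hv : rank n m v ≤ j
    · rw [Walk.edges_cons]
      exact List.mem_cons_of_mem _ (cross p hj hv hy)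
    · rcases x with ⟨i,β⟩|a
      · rcases v with ⟨i',β'⟩|b
        · rw [rank_inl] at hv
          omega
        · have hb : b.val = 0 := h
          rw [rank_inr] at hv
          omega
      · rcases v with ⟨i',β'⟩|b
        · rw [rank_inl] at hv
          omega
        · have hadj : a.val + 1 = b.val ∨ b.val + 1 = a.val := h
          rw [rank_inr] at hx hv
          have hby := b.isLt
          have hx' : Sum.inr a = pvx n m j := inr_eq_pvx n m (by omega) (by omega)
          have hy' : Sum.inr b = pvx n m (j+1) := inr_eq_pvx n m (by omega) (by omega)
          rw [Walk.edges_cons]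
          refine List.mem_cons.mpr (Or.inl ?_)
          rw [Ej, hx', hy']


lemma length_lb (hm : 3 ≤ m) {i : Fin n} {β : Bool} {y : Vtx n m}
    (w : (G n m).Walk (.inl (i,β)) y) (hy : y = pvx n m m) : m + 1 ≤ w.length := by
  cases w with
  | nil => rw [pvx_def n m (le_refl m)] at hy; exact absurd hy (by simp)
  | cons h p =>
    rename_i v
    subst hy
    -- the walk contains all path edges and the first edge
    have hEmem : ∀ j, j + 1 ≤ m → Ej n m j ∈ (Walk.cons h p).edges := by
      intro j hj
      refine cross n m (Walk.cons h p) hj ?_ ?_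
      · rw [rank_inl]; omega
      · rw [pvx_def n m (le_refl m)]
        exact (by omega : j + 1 ≤ m)
    have hfst : s(Sum.inl (i,β), v) ∈ (Walk.cons h p).edges := by
      rw [Walk.edges_cons]; exact List.mem_cons_self
    set F : Finset (Sym2 (Vtx n m)) :=
      insert s(Sum.inl (i,β), v) ((Finset.range m).image (Ej n m)) with hF
    have hcard : F.card = m + 1 := by
      rw [hF, Finset.card_insert_of_notMem, Finset.card_image_of_injOn, Finset.card_range]
      · intro a ha b hb hab
        rw [Finset.mem_coe, Finset.mem_range] at ha hb
        exact Ej_inj n m (by omega) (by omega) hab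
      · intro hmem
        rw [Finset.mem_image] at hmem
        obtain ⟨j, hj, hj2⟩ := hmem
        rw [Finset.mem_range] at hj
        have := Ej_no_inl n m (by omega : j+1 ≤ m) (i,β)
        rw [hj2] at this
        exact this (Sym2.mem_mk_left _ _)
    have hsub : F ⊆ (Walk.cons h p).edges.toFinset := by
      rw [hF]
      intro e he
      rw [List.mem_toFinset]
      rcases Finset.mem_insert.mp he with rfl | he
      · exact hfst
      · rw [Finset.mem_image] at he
        obtain ⟨j, hj, rfl⟩ := he
        rw [Finset.mem_range] at hj
        exact hEmem j (by omega)
    calc m + 1 = F.card := hcard.symm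
    _ ≤ (Walk.cons h p).edges.toFinset.card := Finset.card_le_card hsub
    _ ≤ (Walk.cons h p).edges.length := List.toFinset_card_le _
    _ = (Walk.cons h p).length := Walk.length_edges _

lemma exists_short_walk (hm : 3 ≤ m) (x y : Vtx n m) :
    ∃ w : (G n m).Walk x y, w.length ≤ m + 1 := by
  rcases x with ⟨i,β⟩|a <;> rcases y with ⟨j,γ⟩|b
  · refine ⟨Walk.cons (adj_spoke n m i β) (Walk.cons ((adj_spoke n m j γ).symm)
      Walk.nil), ?_⟩
    simp [Walk.length_cons]
    omega
  · rw [← inr_pvx n m b]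
    refine ⟨WS n m i β b.val (by omega), ?_⟩
    rw [WS, Walk.length_cons, W1_length]
    omega
  · rw [← inr_pvx n m a]
    refine ⟨(WS n m j γ a.val (by omega)).reverse, ?_⟩
    rw [Walk.length_reverse, WS, Walk.length_cons, W1_length]
    omega
  · rcases le_total a.val b.val with hab | hab
    · rw [← inr_pvx n m a, ← inr_pvx n m b]
      refine ⟨W1 n m a.val b.val hab (by omega), ?_⟩
      rw [W1_length]
      omega
    · rw [← inr_pvx n m a, ← inr_pvx n m b]
      refine ⟨(W1 n m b.val a.val hab (by omega)).reverse, ?_⟩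
      rw [Walk.length_reverse, W1_length]
      omega

lemma ediam_eq (hn : 1 ≤ n) (hm : 3 ≤ m) : (G n m).ediam = (m + 1 : ℕ) := by
  refine le_antisymm ?_ ?_
  · apply SimpleGraph.ediam_le_of_edist_le
    intro x y
    obtain ⟨w, hw⟩ := exists_short_walk n m hm x y
    calc (G n m).edist x y ≤ w.length := SimpleGraph.edist_le w
    _ ≤ ((m+1 : ℕ) : ℕ∞) := by exact_mod_cast hw
  · have hlb : ((m+1 : ℕ) : ℕ∞) ≤ (G n m).edist (Sum.inl (⟨0, by omega⟩, false)) (pvx n m m) := by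
      rw [SimpleGraph.edist_eq_sInf]
      apply le_sInf
      rintro _ ⟨w, rfl⟩
      show ((m+1 : ℕ) : ℕ∞) ≤ (w.length : ℕ∞)
      exact_mod_cast length_lb n m hm w rfl
    exact hlb.trans (SimpleGraph.edist_le_ediam)

lemma diam_eq (hn : 1 ≤ n) (hm : 3 ≤ m) : (G n m).diam = m + 1 := by
  rw [SimpleGraph.diam, ediam_eq n m hn hm, ENat.toNat_coe]


/-! ### Lower bound for proper rainbow connection -/

def Sedge (i : Fin n) (β : Bool) : Sym2 (Vtx n m) := s(Sum.inl (i,β), pvx n m 0)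

def Tedge (i : Fin n) (β : Bool) : Sym2 (Vtx n m) := s(Sum.inl (i,β), Sum.inl (i,!β))

lemma Tedge_swap (i : Fin n) (β : Bool) : Tedge n m i (!β) = Tedge n m i β := by
  rw [Tedge, Tedge, Bool.not_not, Sym2.eq_swap]

lemma Sedge_mem (i : Fin n) (β : Bool) : Sedge n m i β ∈ (G n m).edgeSet :=
  (G n m).mem_edgeSet.mpr (adj_spoke n m i β)

lemma Tedge_mem (i : Fin n) (β : Bool) : Tedge n m i β ∈ (G n m).edgeSet :=
  (G n m).mem_edgeSet.mpr (adj_tri n m i (by simp))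

lemma Ej_mem {j : ℕ} (hj : j + 1 ≤ m) : Ej n m j ∈ (G n m).edgeSet :=
  (G n m).mem_edgeSet.mpr (adj_pvx n m (by omega) (by omega) (Or.inl rfl))

variable {c : Sym2 (Vtx n m) → ℕ}

/-- the set of colours used on the pendant path -/
def Pc (c : Sym2 (Vtx n m) → ℕ) : Finset ℕ := (Finset.range m).image (fun j => c (Ej n m j))

lemma notPc_of_mem {x y : Vtx n m} {w : (G n m).Walk x y} (hy : y = pvx n m m)
    (hx : rank n m x = 0) (hr : w.IsRainbow c) {e : Sym2 (Vtx n m)}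
    (he : e ∈ w.edges) (hne : ∀ j, j + 1 ≤ m → e ≠ Ej n m j) : c e ∉ Pc n m c := by
  intro hmem
  rw [Pc, Finset.mem_image] at hmem
  obtain ⟨j, hj, hcj⟩ := hmem
  rw [Finset.mem_range] at hj
  have hEmem : Ej n m j ∈ w.edges := by
    refine cross n m w (by omega) (by omega) ?_
    rw [hy, pvx_def n m (le_refl m)]
    exact (by omega : j + 1 ≤ m)
  have := List.inj_on_of_nodup_map hr he hEmem hcj.symm
  exact hne j (by omega) this

lemma Sedge_ne_Ej (i : Fin n) (β : Bool) {j : ℕ} (hj : j + 1 ≤ m) :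
    Sedge n m i β ≠ Ej n m j := by
  intro hc
  have := Ej_no_inl n m hj (i,β)
  rw [← hc, Sedge] at this
  exact this (Sym2.mem_mk_left _ _)

lemma Tedge_ne_Ej (i : Fin n) (β : Bool) {j : ℕ} (hj : j + 1 ≤ m) :
    Tedge n m i β ≠ Ej n m j := by
  intro hc
  have := Ej_no_inl n m hj (i,β)
  rw [← hc, Tedge] at this
  exact this (Sym2.mem_mk_left _ _)

/-- the key structural step: a rainbow path from a triangle vertex to the far end of the
pendant path starts with a spoke, or with a triangle edge followed by a spoke. -/
lemma spoke_step (hm : 3 ≤ m) (i : Fin n) (β : Bool) {y : Vtx n m}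
    (w : (G n m).Walk (.inl (i,β)) y) (hy : y = pvx n m m) (hp : w.IsPath)
    (hr : w.IsRainbow c) :
    c (Sedge n m i β) ∉ Pc n m c ∨
      (c (Sedge n m i (!β)) ∉ Pc n m c ∧ c (Tedge n m i β) ∉ Pc n m c) := by
  cases w with
  | nil => rw [pvx_def n m (le_refl m)] at hy; exact absurd hy (by simp)
  | cons h p =>
    rename_i v
    rcases v with ⟨i',γ⟩|b
    · -- first step is the triangle edge
      have h' : adjF n m (Sum.inl (i,β)) (Sum.inl (i',γ)) := h
      obtain ⟨rfl, hbg⟩ := h'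
      have hγ : γ = !β := by rcases β <;> rcases γ <;> simp_all
      subst hγ
      cases p with
      | nil => rw [pvx_def n m (le_refl m)] at hy; exact absurd hy (by simp)
      | cons h2 q =>
        rename_i v2
        -- the second vertex must be the hub
        have hv2 : v2 = pvx n m 0 := by
          rcases v2 with ⟨i2,γ2⟩|b2
          · have h2' : adjF n m (Sum.inl (i, !β)) (Sum.inl (i2,γ2)) := h2
            obtain ⟨rfl, hbg2⟩ := h2'
            have hγ2 : γ2 = β := by rcases β <;> rcases γ2 <;> simp_all
            subst hγ2
            -- contradiction with path property
            exfalso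
            rw [Walk.cons_isPath_iff] at hp
            exact hp.2 (by
              rw [Walk.support_cons]
              exact List.mem_cons_of_mem _ (Walk.start_mem_support q))
          · have hb2 : b2.val = 0 := h2
            exact inr_eq_pvx n m (by omega) hb2
        subst hv2
        refine Or.inr ⟨?_, ?_⟩
        · refine notPc_of_mem n m hy (rank_inl n m _) hr ?_ (fun j hj => Sedge_ne_Ej n m i (!β) hj)
          rw [Walk.edges_cons, Walk.edges_cons]
          exact List.mem_cons_of_mem _ List.mem_cons_self
        · refine notPc_of_mem n m hy (rank_inl n m _) hr ?_ (fun j hj => Tedge_ne_Ej n m i β hj)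
          rw [Walk.edges_cons]
          exact List.mem_cons_self
    · -- first step is the spoke
      have hb : b.val = 0 := h
      have hv : Sum.inr b = pvx n m 0 := inr_eq_pvx n m (by omega) hb
      refine Or.inl ?_
      refine notPc_of_mem n m hy (rank_inl n m _) hr ?_ (fun j hj => Sedge_ne_Ej n m i β hj)
      rw [Walk.edges_cons]
      refine List.mem_cons.mpr (Or.inl ?_)
      rw [Sedge, hv]

lemma Pc_card (hn : 1 ≤ n) (hm : 3 ≤ m) (hrc : (G n m).RainbowConnected c) :
    (Pc n m c).card = m := by
  obtain ⟨w, hp, hr⟩ := hrc (Sum.inl (⟨0, by omega⟩, false)) (pvx n m m)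
  rw [Pc, Finset.card_image_of_injOn, Finset.card_range]
  intro a ha b hb hab
  rw [Finset.mem_coe, Finset.mem_range] at ha hb
  have hEa : Ej n m a ∈ w.edges := by
    refine cross n m w (by omega) (by rw [rank_inl]; omega) ?_
    rw [pvx_def n m (le_refl m)]
    exact (by omega : a + 1 ≤ m)
  have hEb : Ej n m b ∈ w.edges := by
    refine cross n m w (by omega) (by rw [rank_inl]; omega) ?_
    rw [pvx_def n m (le_refl m)]
    exact (by omega : b + 1 ≤ m)
  exact Ej_inj n m (by omega) (by omega) (List.inj_on_of_nodup_map hr hEa hEb hab)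

lemma Pc_subset {K : ℕ} (hm : 3 ≤ m) (hcol : (G n m).ColorsLE c K) :
    Pc n m c ⊆ Finset.range K := by
  intro x hx
  rw [Pc, Finset.mem_image] at hx
  obtain ⟨j, hj, rfl⟩ := hx
  rw [Finset.mem_range] at hj ⊢
  exact hcol _ (Ej_mem n m (by omega))

lemma prc_bound1 {K : ℕ} (hn : 1 ≤ n) (hm : 3 ≤ m) (hcol : (G n m).ColorsLE c K)
    (hprop : (G n m).IsProperEdgeColoring c) (hrc : (G n m).RainbowConnected c) :
    m + n ≤ K := by
  have hchoice : ∀ i : Fin n, ∃ β, c (Sedge n m i β) ∉ Pc n m c := by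
    intro i
    obtain ⟨w, hp, hr⟩ := hrc (Sum.inl (i, false)) (pvx n m m)
    rcases spoke_step n m hm i false w rfl hp hr with h | ⟨h, -⟩
    · exact ⟨false, h⟩
    · exact ⟨true, h⟩
  choose βf hβf using hchoice
  have hswap : ∀ (i : Fin n) (β : Bool),
      Sedge n m i β = s(pvx n m 0, Sum.inl (i,β)) := fun i β => Sym2.eq_swap
  have hinj : Function.Injective (fun i : Fin n => c (Sedge n m i (βf i))) := by
    intro i i' hii
    by_contra hne
    refine hprop ((adj_spoke n m i (βf i)).symm) ((adj_spoke n m i' (βf i')).symm) ?_ ?_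
    · simp [hne]
    · rw [← hswap, ← hswap]
      exact hii
  set F : Finset ℕ := Finset.univ.image (fun i : Fin n => c (Sedge n m i (βf i))) with hF
  have hFcard : F.card = n := by
    rw [hF, Finset.card_image_of_injective _ hinj, Finset.card_univ, Fintype.card_fin]
  have hdisj : Disjoint F (Pc n m c) := by
    rw [Finset.disjoint_left]
    intro x hx hx2
    rw [hF, Finset.mem_image] at hx
    obtain ⟨i, -, rfl⟩ := hx
    exact hβf i hx2
  have hFsub : F ⊆ Finset.range K := by
    intro x hx
    rw [hF, Finset.mem_image] at hx
    obtain ⟨i, -, rfl⟩ := hx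
    rw [Finset.mem_range]
    exact hcol _ (Sedge_mem n m i (βf i))
  calc m + n = (Pc n m c).card + F.card := by
        rw [hFcard, Pc_card n m hn hm hrc]
  _ = (Pc n m c ∪ F).card := (Finset.card_union_of_disjoint hdisj.symm).symm
  _ ≤ (Finset.range K).card := Finset.card_le_card
        (Finset.union_subset (Pc_subset n m hm hcol) hFsub)
  _ = K := Finset.card_range K

lemma prc_bound2 {K : ℕ} (hn : 1 ≤ n) (hm : 3 ≤ m) (hcol : (G n m).ColorsLE c K)
    (hprop : (G n m).IsProperEdgeColoring c) (hrc : (G n m).RainbowConnected c) :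
    m + 2 ≤ K := by
  set i0 : Fin n := ⟨0, by omega⟩ with hi0
  obtain ⟨w1, hp1, hr1⟩ := hrc (Sum.inl (i0, false)) (pvx n m m)
  obtain ⟨w2, hp2, hr2⟩ := hrc (Sum.inl (i0, true)) (pvx n m m)
  have d1 := spoke_step n m hm i0 false w1 rfl hp1 hr1
  have d2 := spoke_step n m hm i0 true w2 rfl hp2 hr2
  rw [show (!false) = true from rfl] at d1
  rw [show (!true) = false from rfl] at d2
  have hTT : Tedge n m i0 true = Tedge n m i0 false := Tedge_swap n m i0 false
  rw [hTT] at d2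
  have hAB : c (Sedge n m i0 false) ≠ c (Sedge n m i0 true) := by
    intro hcc
    refine hprop ((adj_spoke n m i0 false).symm) ((adj_spoke n m i0 true).symm) (by simp) ?_
    rw [← Sym2.eq_swap (a := (Sum.inl (i0, false) : Vtx n m)),
      ← Sym2.eq_swap (a := (Sum.inl (i0, true) : Vtx n m))]
    exact hcc
  have hAC : c (Sedge n m i0 false) ≠ c (Tedge n m i0 false) := by
    intro hcc
    exact hprop (adj_spoke n m i0 false) (adj_tri n m i0 (show (false:Bool) ≠ !false by simp))
      (by rw [pvx_def n m (by omega)]; simp) hcc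
  have hBC : c (Sedge n m i0 true) ≠ c (Tedge n m i0 false) := by
    intro hcc
    rw [← hTT] at hcc
    exact hprop (adj_spoke n m i0 true) (adj_tri n m i0 (show (true:Bool) ≠ !true by simp))
      (by rw [pvx_def n m (by omega)]; simp) hcc
  obtain ⟨x, y, hxy, hx, hy, hxK, hyK⟩ :
      ∃ x y : ℕ, x ≠ y ∧ x ∉ Pc n m c ∧ y ∉ Pc n m c ∧ x < K ∧ y < K := by
    rcases d1 with h1 | ⟨h1, h1'⟩
    · rcases d2 with h2 | ⟨h2, h2'⟩
      · exact ⟨_, _, hAB, h1, h2, hcol _ (Sedge_mem n m i0 false),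
          hcol _ (Sedge_mem n m i0 true)⟩
      · exact ⟨_, _, hAC, h1, h2', hcol _ (Sedge_mem n m i0 false),
          hcol _ (Tedge_mem n m i0 false)⟩
    · exact ⟨_, _, hBC, h1, h1', hcol _ (Sedge_mem n m i0 true),
        hcol _ (Tedge_mem n m i0 false)⟩
  have hsub : insert x (insert y (Pc n m c)) ⊆ Finset.range K := by
    intro z hz
    rcases Finset.mem_insert.mp hz with rfl | hz
    · rw [Finset.mem_range]; exact hxK
    rcases Finset.mem_insert.mp hz with rfl | hz
    · rw [Finset.mem_range]; exact hyK
    · exact Pc_subset n m hm hcol hz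
  have hcard : (insert x (insert y (Pc n m c))).card = m + 2 := by
    rw [Finset.card_insert_of_notMem, Finset.card_insert_of_notMem hy,
      Pc_card n m hn hm hrc]
    rw [Finset.mem_insert]
    push_neg
    exact ⟨hxy, hx⟩
  calc m + 2 = _ := hcard.symm
  _ ≤ (Finset.range K).card := Finset.card_le_card hsub
  _ = K := Finset.card_range K


lemma prc_nonempty (hm : 3 ≤ m) :
    {K | ∃ c : Sym2 (Vtx n m) → ℕ, (G n m).ColorsLE c K ∧ (G n m).IsProperEdgeColoring c ∧
      (G n m).RainbowConnected c}.Nonempty := by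
  classical
  set c0 : Sym2 (Vtx n m) → ℕ := fun e => (Fintype.equivFin (Sym2 (Vtx n m)) e).val with hc0
  have hinj : Function.Injective c0 := by
    intro a b hab
    exact (Fintype.equivFin (Sym2 (Vtx n m))).injective (Fin.ext hab)
  refine ⟨Fintype.card (Sym2 (Vtx n m)), c0, ?_, ?_, ?_⟩
  · intro e _
    exact (Fintype.equivFin _ e).isLt
  · intro u v w h1 h2 hvw hc
    have heq := hinj hc
    rw [Sym2.eq_iff] at heq
    rcases heq with ⟨-, hv⟩ | ⟨hu, hv⟩
    · exact hvw hv
    · exact hvw (hv.trans hu)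
  · intro u v
    obtain ⟨w⟩ := (G_connected n m hm).preconnected u v
    refine ⟨(w.toPath : (G n m).Walk u v), w.toPath.2, ?_⟩
    exact (w.toPath.2.isTrail.edges_nodup).map hinj

end Stmt4Aux


theorem stmt4 (k t : ℕ) (ht : 1 ≤ t) (hkt : t ≤ k) :
    ∃ (V : Type) (instF : Fintype V) (G : SimpleGraph V) (instD : DecidableRel G.Adj),
      G.Connected ∧ @SimpleGraph.maxDegree V G instF instD = 2 * t ^ 2 + 1 ∧
      G.diam = 2 * t ^ 2 + 1 + k ∧ G.rcNumber + t ≤ G.prcNumber := by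
  classical
  obtain ⟨q, hq⟩ : ∃ q, q = t ^ 2 := ⟨t ^ 2, rfl⟩
  have hq1 : 1 ≤ q := by
    rw [hq]
    calc 1 = 1 ^ 2 := (one_pow 2).symm
    _ ≤ t ^ 2 := Nat.pow_le_pow_left ht 2
  have hqt : t = 1 → q = 1 := by rintro rfl; simpa using hq
  have hqt2 : 2 ≤ t → t + 2 ≤ q := by
    intro h2
    have : 2 * t ≤ t * t := Nat.mul_le_mul_right t h2
    have hq' : q = t * t := by rw [hq, pow_two]
    omega
  set n := q with hn
  set m := 2 * q + k with hm
  have hn1 : 1 ≤ n := hq1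
  have hm3 : 3 ≤ m := by omega
  refine ⟨Stmt4Aux.Vtx n m, inferInstance, Stmt4Aux.G n m, inferInstance,
    Stmt4Aux.G_connected n m hm3, ?_, ?_, ?_⟩
  · rw [Stmt4Aux.maxDegree_eq n m hn1 hm3]
    omega
  · rw [Stmt4Aux.diam_eq n m hn1 hm3]
    omega
  · have hrc_le : (Stmt4Aux.G n m).rcNumber ≤ (if n = 1 then m+1 else m+2) :=
      Nat.sInf_le ⟨Stmt4Aux.crc n m, Stmt4Aux.crc_colorsLE n m hm3,
        Stmt4Aux.rc_rainbow n m hm3⟩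
    have hprc_mem := Nat.sInf_mem (Stmt4Aux.prc_nonempty n m hm3)
    obtain ⟨c, hcol, hprop, hrc⟩ := hprc_mem
    have hb1 : m + n ≤ (Stmt4Aux.G n m).prcNumber :=
      Stmt4Aux.prc_bound1 n m hn1 hm3 hcol hprop hrc
    have hb2 : m + 2 ≤ (Stmt4Aux.G n m).prcNumber :=
      Stmt4Aux.prc_bound2 n m hn1 hm3 hcol hprop hrc
    by_cases h1 : n = 1
    · have ht1 : t = 1 := by
        by_contra hne
        have h2 : 2 ≤ t := by omega
        have := hqt2 h2
        omega
      rw [if_pos h1] at hrc_le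
      omega
    · have h2 : 2 ≤ t := by
        by_contra hne
        exact h1 (hqt (by omega))
      have := hqt2 h2
      rw [if_neg h1] at hrc_le
      omega
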